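/- arXiv:1309.2676 — 2 statements merged into one kernel-verified Lean document; each statement's English description precedes it below -/
import Mathlib

section
/- Suppose D is a dictionary satisfying the RIP of order k with constant δ_k < 1, meaning (1−δ_k)‖α‖₂² ≤ ‖Dα‖₂² ≤ (1+δ_k)‖α‖₂² for all k-sparse α. Let v ∈ ℝ^d be arbitrary, let T̂ be the set of indices of the k largest-magnitude entries of D*v, and let T* be any index set of size at most k. Then ‖P_{T̂} v‖₂² ≥ ((1−δ_k)/(1+δ_k)) ‖P_{T*} v‖₂². -/
/-- `P_T`: orthogonal projection of `ℝ^d` onto the span of the columns of `D` indexed by `T`. -/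
noncomputable def projSpan {d n : ℕ}
    (D : EuclideanSpace ℝ (Fin n) →L[ℝ] EuclideanSpace ℝ (Fin d)) (T : Finset (Fin n)) :
    EuclideanSpace ℝ (Fin d) →L[ℝ] EuclideanSpace ℝ (Fin d) :=
  (Submodule.span ℝ ((fun i => D (EuclideanSpace.single i 1)) '' (T : Set (Fin n)))).subtypeL.comp
    (Submodule.orthogonalProjection _)

private lemma euclid_sum_single {n : ℕ} (α : EuclideanSpace ℝ (Fin n)) :
    α = ∑ i, α i • EuclideanSpace.single i (1:ℝ) := by
  ext j
  rw [WithLp.ofLp_sum, Finset.sum_apply]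
  simp [EuclideanSpace.single_apply]

private lemma euclid_norm_sq {n : ℕ} (α : EuclideanSpace ℝ (Fin n)) :
    ‖α‖ ^ 2 = ∑ i, α i ^ 2 := by
  rw [EuclideanSpace.norm_eq, Real.sq_sqrt (by positivity)]
  simp [sq_abs]

private lemma sum_le_sum_of_card_le' {ι : Type*} [DecidableEq ι] {A B : Finset ι} (f : ι → ℝ)
    (hf : ∀ i ∈ B, 0 ≤ f i) (hcard : A.card ≤ B.card)
    (h : ∀ j ∈ A, ∀ i ∈ B, f j ≤ f i) : ∑ j ∈ A, f j ≤ ∑ i ∈ B, f i := by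
  rcases B.eq_empty_or_nonempty with hB | hB
  · subst hB
    simp only [Finset.card_empty, Nat.le_zero, Finset.card_eq_zero] at hcard
    simp [hcard]
  · set m := B.inf' hB f with hm
    have hm0 : 0 ≤ m := by
      obtain ⟨i, hi, him⟩ := B.exists_mem_eq_inf' hB f
      rw [hm, him]; exact hf i hi
    calc ∑ j ∈ A, f j ≤ ∑ _j ∈ A, m := by
          refine Finset.sum_le_sum fun j hj => ?_
          exact Finset.le_inf' hB f fun i hi => h j hj i hi
      _ = A.card * m := by rw [Finset.sum_const, nsmul_eq_mul]
      _ ≤ B.card * m := mul_le_mul_of_nonneg_right (Nat.cast_le.2 hcard) hm0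
      _ = ∑ _i ∈ B, m := by rw [Finset.sum_const, nsmul_eq_mul]
      _ ≤ ∑ i ∈ B, f i := Finset.sum_le_sum fun i hi => Finset.inf'_le f hi

private lemma sum_split' {ι : Type*} [DecidableEq ι] (s t : Finset ι) (f : ι → ℝ) :
    ∑ i ∈ s, f i = ∑ i ∈ s \ t, f i + ∑ i ∈ s ∩ t, f i := by
  rw [← Finset.sum_union (Finset.disjoint_sdiff_inter s t), Finset.sdiff_union_inter]

set_option maxHeartbeats 1000000 in
/-- Lower and upper bounds on `∑_{i∈T} ⟨dᵢ,v⟩²` in terms of `‖P_T v‖²`. -/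
private lemma proj_bounds {d n k : ℕ} (δ : ℝ)
    (D : EuclideanSpace ℝ (Fin n) →L[ℝ] EuclideanSpace ℝ (Fin d))
    (hRIP : ∀ α : EuclideanSpace ℝ (Fin n),
      (∃ s : Finset (Fin n), s.card ≤ k ∧ ∀ i ∉ s, α i = 0) →
      (1 - δ) * ‖α‖ ^ 2 ≤ ‖D α‖ ^ 2 ∧ ‖D α‖ ^ 2 ≤ (1 + δ) * ‖α‖ ^ 2)
    (v : EuclideanSpace ℝ (Fin d)) (T : Finset (Fin n)) (hT : T.card ≤ k)
    (hpos : 0 < 1 + δ) :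
    (1 - δ) * ‖projSpan D T v‖ ^ 2 ≤
        ∑ i ∈ T, (inner ℝ (D (EuclideanSpace.single i 1)) v : ℝ) ^ 2 ∧
      ∑ i ∈ T, (inner ℝ (D (EuclideanSpace.single i 1)) v : ℝ) ^ 2 ≤
        (1 + δ) * ‖projSpan D T v‖ ^ 2 := by
  classical
  set f : Fin n → EuclideanSpace ℝ (Fin d) := fun i => D (EuclideanSpace.single i 1) with hf
  set b : Fin n → ℝ := fun i => (inner ℝ (f i) v : ℝ) with hb
  set W : Submodule ℝ (EuclideanSpace ℝ (Fin d)) := Submodule.span ℝ (f '' (T : Set (Fin n)))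
    with hW
  set u : EuclideanSpace ℝ (Fin d) := (Submodule.orthogonalProjection W v : EuclideanSpace ℝ (Fin d))
    with hu
  have hproj : projSpan D T v = u := rfl
  have humem : u ∈ W := SetLike.coe_mem _
  have horth : ∀ w ∈ W, (inner ℝ v w : ℝ) = inner ℝ u w := by
    intro w hw
    have h0 : (inner ℝ w (v - u) : ℝ) = 0 :=
      (Submodule.mem_orthogonal W (v - u)).1 (Submodule.sub_starProjection_mem_orthogonal v) w hw
    rw [inner_sub_right] at h0
    linarith [real_inner_comm v w, real_inner_comm u w, h0]
  have hinnerD : ∀ γ : EuclideanSpace ℝ (Fin n), (inner ℝ v (D γ) : ℝ) = ∑ i, γ i * b i := by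
    intro γ
    conv_lhs => rw [euclid_sum_single γ]
    rw [map_sum, inner_sum]
    refine Finset.sum_congr rfl fun i _ => ?_
    rw [map_smul, real_inner_smul_right, real_inner_comm]
  have hNu : ‖u‖ ^ 2 = (inner ℝ v u : ℝ) := by
    rw [horth u humem, real_inner_self_eq_norm_sq]
  set S : ℝ := ∑ i ∈ T, b i ^ 2 with hS
  have hS0 : (0:ℝ) ≤ S := Finset.sum_nonneg fun i _ => sq_nonneg _
  have hN0 : (0:ℝ) ≤ ‖u‖ ^ 2 := sq_nonneg _
  rw [hproj]
  constructor
  · -- lower bound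
    have hsupp_of_mem : ∀ γ, γ ∈ Submodule.span ℝ
        ((fun i => EuclideanSpace.single i (1:ℝ)) '' (T : Set (Fin n))) →
        ∀ i ∉ T, γ i = 0 := by
      intro γ hγ
      induction hγ using Submodule.span_induction with
      | mem x hx =>
          obtain ⟨j, hj, rfl⟩ := hx
          intro i hi
          have hij : i ≠ j := fun h => hi (h ▸ hj)
          simp [EuclideanSpace.single_apply, hij]
      | zero => intro i _; rfl
      | add x y _ _ hx hy => intro i hi; simp [hx i hi, hy i hi]
      | smul c x _ hx => intro i hi; simp [hx i hi]
    have humem' : u ∈ Submodule.map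
        (D : EuclideanSpace ℝ (Fin n) →ₗ[ℝ] EuclideanSpace ℝ (Fin d))
        (Submodule.span ℝ ((fun i => EuclideanSpace.single i (1:ℝ)) '' (T : Set (Fin n)))) := by
      rw [← Submodule.span_image]
      have himg : f '' (T : Set (Fin n)) =
          ⇑(D : EuclideanSpace ℝ (Fin n) →ₗ[ℝ] EuclideanSpace ℝ (Fin d)) ''
            ((fun i => EuclideanSpace.single i (1:ℝ)) '' (T : Set (Fin n))) := by
        rw [Set.image_image]
        rfl
      rw [← himg]; exact humem
    obtain ⟨α, hαmem, hDα⟩ := Submodule.mem_map.mp humem'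
    have hαsupp : ∀ i ∉ T, α i = 0 := hsupp_of_mem α hαmem
    have hDα' : D α = u := hDα
    have hRIPα := (hRIP α ⟨T, hT, hαsupp⟩).1
    rw [hDα'] at hRIPα
    have hαnorm : ‖α‖ ^ 2 = ∑ i ∈ T, α i ^ 2 := by
      rw [euclid_norm_sq]
      refine (Finset.sum_subset (Finset.subset_univ T) ?_).symm
      intro i _ hi
      rw [hαsupp i hi]; ring
    have hNsum : ‖u‖ ^ 2 = ∑ i ∈ T, α i * b i := by
      rw [hNu, ← hDα', hinnerD]
      refine (Finset.sum_subset (Finset.subset_univ T) ?_).symm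
      intro i _ hi
      rw [hαsupp i hi]; ring
    have hCS : (∑ i ∈ T, α i * b i) ^ 2 ≤ (∑ i ∈ T, α i ^ 2) * S :=
      Finset.sum_mul_sq_le_sq_mul_sq T _ _
    rw [← hNsum, ← hαnorm] at hCS
    have hA0 : (0:ℝ) ≤ ‖α‖ ^ 2 := sq_nonneg _
    rcases eq_or_lt_of_le hN0 with hN | hN
    · rw [← hN, mul_zero]; exact hS0
    · rcases eq_or_lt_of_le hA0 with hA | hA
      · exfalso; rw [← hA, zero_mul] at hCS; nlinarith
      · have key : ((1 - δ) * ‖u‖ ^ 2) * ‖α‖ ^ 2 ≤ S * ‖α‖ ^ 2 := by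
          nlinarith [mul_le_mul_of_nonneg_right hRIPα hN.le, hCS]
        exact le_of_mul_le_mul_right key hA
  · -- upper bound
    set β : EuclideanSpace ℝ (Fin n) := WithLp.toLp 2 (fun i => if i ∈ T then b i else 0) with hβ
    have hβsupp : ∀ i ∉ T, β i = 0 := fun i hi => by simp [hβ, hi]
    have hβnorm : ‖β‖ ^ 2 = S := by
      rw [euclid_norm_sq, hS]
      refine (Finset.sum_subset (Finset.subset_univ T) ?_).symm.trans
        (Finset.sum_congr rfl fun i hi => by simp [hβ, hi])
      intro i _ hi
      rw [hβsupp i hi]; ring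
    have hDβmem : D β ∈ W := by
      have hβe : β = ∑ i ∈ T, b i • EuclideanSpace.single i (1:ℝ) := by
        rw [euclid_sum_single β]
        refine (Finset.sum_subset (Finset.subset_univ T) ?_).symm.trans
          (Finset.sum_congr rfl fun i hi => by simp [hβ, hi])
        intro i _ hi
        rw [hβsupp i hi]; simp
      rw [hβe, map_sum]
      simp only [map_smul]
      refine Submodule.sum_smul_mem W _ fun i hi => ?_
      exact Submodule.subset_span ⟨i, hi, rfl⟩
    have hSinner : (inner ℝ v (D β) : ℝ) = S := by
      rw [hinnerD, hS]
      refine (Finset.sum_subset (Finset.subset_univ T) ?_).symm.trans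
        (Finset.sum_congr rfl fun i hi => by simp [hβ, hi, sq])
      intro i _ hi
      rw [hβsupp i hi]; ring
    have hS2 : S = (inner ℝ u (D β) : ℝ) := by rw [← hSinner, horth _ hDβmem]
    have hCS2 : (inner ℝ u (D β) : ℝ) ≤ ‖u‖ * ‖D β‖ := real_inner_le_norm u (D β)
    have hRIPβ := (hRIP β ⟨T, hT, hβsupp⟩).2
    rw [hβnorm] at hRIPβ
    rcases eq_or_lt_of_le hS0 with hSz | hSz
    · rw [← hSz]; exact mul_nonneg hpos.le hN0
    · have h1 : S ≤ ‖u‖ * ‖D β‖ := by rw [hS2]; exact hCS2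
      have h2 : S ^ 2 ≤ ‖u‖ ^ 2 * ‖D β‖ ^ 2 := by nlinarith [mul_self_le_mul_self hS0 h1]
      nlinarith [h2, hRIPβ, hSz, hN0]

/-- If the dictionary `D` satisfies the RIP of order `k` with constant `δ_k < 1`, `v` is
arbitrary, `T̂` consists of indices of the `k` largest-magnitude entries of `D*v`
(the entries of `D*v` are `⟨dᵢ, v⟩`), and `T*` is any set of size at most `k`, then
`‖P_{T̂} v‖² ≥ ((1−δ_k)/(1+δ_k)) ‖P_{T*} v‖²`. -/
theorem stmt4 {d n k : ℕ} (δ : ℝ) (hδ : δ < 1)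
    (D : EuclideanSpace ℝ (Fin n) →L[ℝ] EuclideanSpace ℝ (Fin d))
    (hRIP : ∀ α : EuclideanSpace ℝ (Fin n),
      (∃ s : Finset (Fin n), s.card ≤ k ∧ ∀ i ∉ s, α i = 0) →
      (1 - δ) * ‖α‖ ^ 2 ≤ ‖D α‖ ^ 2 ∧ ‖D α‖ ^ 2 ≤ (1 + δ) * ‖α‖ ^ 2)
    (v : EuclideanSpace ℝ (Fin d))
    (That Tstar : Finset (Fin n)) (hThat : That.card = k)
    (hlargest : ∀ i ∈ That, ∀ j ∉ That,
      |(inner ℝ (D (EuclideanSpace.single j 1)) v : ℝ)| ≤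
        |(inner ℝ (D (EuclideanSpace.single i 1)) v : ℝ)|)
    (hTstar : Tstar.card ≤ k) :
    ((1 - δ) / (1 + δ)) * ‖projSpan D Tstar v‖ ^ 2 ≤ ‖projSpan D That v‖ ^ 2 := by
  classical
  by_cases hpos : 0 < 1 + δ
  · set b : Fin n → ℝ := fun i => (inner ℝ (D (EuclideanSpace.single i 1)) v : ℝ) with hb
    obtain ⟨hlowS, -⟩ := proj_bounds δ D hRIP v Tstar hTstar hpos
    obtain ⟨-, hupS⟩ := proj_bounds δ D hRIP v That (le_of_eq hThat) hpos
    have hdiffcard : (Tstar \ That).card ≤ (That \ Tstar).card := by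
      have h1 := Finset.card_sdiff_add_card_inter Tstar That
      have h2 := Finset.card_sdiff_add_card_inter That Tstar
      rw [Finset.inter_comm] at h2
      omega
    have hdiffsum : ∑ i ∈ Tstar \ That, b i ^ 2 ≤ ∑ i ∈ That \ Tstar, b i ^ 2 := by
      refine sum_le_sum_of_card_le' _ (fun i _ => sq_nonneg _) hdiffcard ?_
      intro j hj i hi
      have habs := hlargest i (Finset.mem_sdiff.1 hi).1 j (Finset.mem_sdiff.1 hj).2
      calc b j ^ 2 = |b j| ^ 2 := (sq_abs _).symm
        _ ≤ |b i| ^ 2 := by gcongr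
        _ = b i ^ 2 := sq_abs _
    have hmono : ∑ i ∈ Tstar, b i ^ 2 ≤ ∑ i ∈ That, b i ^ 2 := by
      rw [sum_split' Tstar That, sum_split' That Tstar, Finset.inter_comm That Tstar]
      linarith
    have hX0 : (0:ℝ) ≤ ‖projSpan D Tstar v‖ ^ 2 := sq_nonneg _
    have hY0 : (0:ℝ) ≤ ‖projSpan D That v‖ ^ 2 := sq_nonneg _
    rw [div_mul_eq_mul_div, div_le_iff₀ hpos]
    nlinarith [hlowS, hmono, hupS]
  · push_neg at hpos
    have hcolzero : ∀ i ∈ Tstar, D (EuclideanSpace.single i (1:ℝ)) = 0 := by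
      intro i hi
      have hsparse : ∃ s : Finset (Fin n), s.card ≤ k ∧
          ∀ j ∉ s, (EuclideanSpace.single i (1:ℝ) : EuclideanSpace ℝ (Fin n)) j = 0 :=
        ⟨Tstar, hTstar, fun j hj => by
          have hij : j ≠ i := fun h => hj (h ▸ hi)
          simp [EuclideanSpace.single_apply, hij]⟩
      have h2 := (hRIP _ hsparse).2
      have hnorm1 : ‖(EuclideanSpace.single i (1:ℝ) : EuclideanSpace ℝ (Fin n))‖ = 1 := by
        simp [EuclideanSpace.norm_single]
      rw [hnorm1] at h2
      have h3 : ‖D (EuclideanSpace.single i (1:ℝ))‖ ^ 2 ≤ 0 := by nlinarith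
      have h4 : ‖D (EuclideanSpace.single i (1:ℝ))‖ = 0 := by
        nlinarith [norm_nonneg (D (EuclideanSpace.single i (1:ℝ)))]
      exact norm_eq_zero.1 h4
    have hWbot : projSpan D Tstar v = 0 := by
      have hmem : projSpan D Tstar v ∈ Submodule.span ℝ
          ((fun i => D (EuclideanSpace.single i 1)) '' (Tstar : Set (Fin n))) :=
        SetLike.coe_mem _
      have hle : Submodule.span ℝ
          ((fun i => D (EuclideanSpace.single i 1)) '' (Tstar : Set (Fin n))) ≤ ⊥ := by
        rw [Submodule.span_le]
        rintro x ⟨j, hj, rfl⟩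
        simp [hcolzero j hj]
      simpa using hle hmem
    rw [hWbot, norm_zero]
    have hz : ((1 - δ) / (1 + δ)) * (0:ℝ) ^ 2 = 0 := by ring
    rw [hz]
    positivity
end

section
/- Let P and Q = I − P be complementary orthogonal projections on ℝ^d, M ∈ ℝ^{m×d} with ‖P(I − M*M)P'‖ ≤ δ for all relevant projection pairs P, P' of bounded support size, and ‖MP‖² ≤ 1+δ'. Then for any vectors u, e and constants γ > 0, α > 0: ‖P M*(Mu + e)‖₂² ≤ ((1+γ)/γ)(1+δ')‖e‖₂² + (1+α)(1+γ)(‖u‖₂² − ‖Qu‖₂²) + (1 + 1/α)(1+γ)δ²‖u‖₂². -/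
lemma split_sq {E : Type*} [NormedAddCommGroup E] (a b : E) (c : ℝ) (hc : 0 < c) :
    ‖a + b‖ ^ 2 ≤ (1 + c) * ‖a‖ ^ 2 + (1 + 1 / c) * ‖b‖ ^ 2 := by
  have h : ‖a + b‖ ≤ ‖a‖ + ‖b‖ := norm_add_le a b
  have h2 : ‖a + b‖ ^ 2 ≤ (‖a‖ + ‖b‖) ^ 2 := by
    apply pow_le_pow_left₀ (norm_nonneg _) h
  have key : (‖a‖ + ‖b‖) ^ 2 ≤ (1 + c) * ‖a‖ ^ 2 + (1 + 1 / c) * ‖b‖ ^ 2 := by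
    have hid : (1 + c) * ‖a‖ ^ 2 + (1 + 1 / c) * ‖b‖ ^ 2 - (‖a‖ + ‖b‖) ^ 2
        = (c * ‖a‖ - ‖b‖) ^ 2 / c := by field_simp; ring
    have hpos : (0:ℝ) ≤ (c * ‖a‖ - ‖b‖) ^ 2 / c := by positivity
    linarith
  linarith

/-- Key estimate of Lemma (SSCoSaMP_Pxp_bound): let `P` be an orthogonal projection on `ℝ^d`
(idempotent and self-adjoint), `Q = I − P`, and `M : ℝ^d → ℝ^m` with `‖M P‖² ≤ 1 + δ'` and
`‖P((I − M*M)u)‖ ≤ δ‖u‖`.  Then for any `e` and constants `γ, α > 0`: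
`‖P M*(Mu + e)‖² ≤ ((1+γ)/γ)(1+δ')‖e‖² + (1+α)(1+γ)(‖u‖² − ‖Qu‖²) + (1+1/α)(1+γ)δ²‖u‖²`. -/
theorem stmt16 {d m : ℕ} (δ δ' γ α : ℝ) (hγ : 0 < γ) (hα : 0 < α)
    (P : EuclideanSpace ℝ (Fin d) →L[ℝ] EuclideanSpace ℝ (Fin d))
    (M : EuclideanSpace ℝ (Fin d) →L[ℝ] EuclideanSpace ℝ (Fin m))
    (hidem : ∀ z, P (P z) = P z)
    (hsa : ∀ z w : EuclideanSpace ℝ (Fin d), (inner ℝ (P z) w : ℝ) = (inner ℝ z (P w) : ℝ))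
    (hMP : ‖M ∘L P‖ ^ 2 ≤ 1 + δ')
    (u : EuclideanSpace ℝ (Fin d)) (e : EuclideanSpace ℝ (Fin m))
    (hδu : ‖P ((ContinuousLinearMap.id ℝ (EuclideanSpace ℝ (Fin d)) -
        ContinuousLinearMap.adjoint M ∘L M) u)‖ ≤ δ * ‖u‖) :
    ‖P (ContinuousLinearMap.adjoint M (M u + e))‖ ^ 2 ≤
      ((1 + γ) / γ) * (1 + δ') * ‖e‖ ^ 2 +
        (1 + α) * (1 + γ) * (‖u‖ ^ 2 - ‖u - P u‖ ^ 2) +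
        (1 + 1 / α) * (1 + γ) * δ ^ 2 * ‖u‖ ^ 2 := by
  set Mstar := ContinuousLinearMap.adjoint M with hM
  -- P is self-adjoint
  have hPadj : P = ContinuousLinearMap.adjoint P := by
    rw [ContinuousLinearMap.eq_adjoint_iff]
    exact hsa
  -- bound on ‖P (M* e)‖
  have hPMe : ‖P (Mstar e)‖ ^ 2 ≤ (1 + δ') * ‖e‖ ^ 2 := by
    have : P (Mstar e) = (ContinuousLinearMap.adjoint (M ∘L P)) e := by
      rw [ContinuousLinearMap.adjoint_comp, ← hPadj]
      rfl
    rw [this]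
    have hle : ‖(ContinuousLinearMap.adjoint (M ∘L P)) e‖ ≤ ‖M ∘L P‖ * ‖e‖ := by
      calc ‖(ContinuousLinearMap.adjoint (M ∘L P)) e‖
          ≤ ‖ContinuousLinearMap.adjoint (M ∘L P)‖ * ‖e‖ :=
            ContinuousLinearMap.le_opNorm _ _
        _ = ‖M ∘L P‖ * ‖e‖ := by
            rw [LinearIsometryEquiv.norm_map ContinuousLinearMap.adjoint]
    calc ‖(ContinuousLinearMap.adjoint (M ∘L P)) e‖ ^ 2
        ≤ (‖M ∘L P‖ * ‖e‖) ^ 2 := pow_le_pow_left₀ (norm_nonneg _) hle 2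
      _ = ‖M ∘L P‖ ^ 2 * ‖e‖ ^ 2 := by ring
      _ ≤ (1 + δ') * ‖e‖ ^ 2 := by nlinarith [sq_nonneg ‖e‖]
  -- Pythagoras: ‖P u‖² = ‖u‖² - ‖u - P u‖²
  have hpyth : ‖P u‖ ^ 2 = ‖u‖ ^ 2 - ‖u - P u‖ ^ 2 := by
    have horth : (inner ℝ (P u) (u - P u) : ℝ) = 0 := by
      rw [hsa, map_sub, hidem, sub_self, inner_zero_right]
    have : ‖P u + (u - P u)‖ ^ 2 = ‖P u‖ ^ 2 + ‖u - P u‖ ^ 2 := by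
      rw [norm_add_sq_real, horth]; ring
    rw [show P u + (u - P u) = u by abel] at this
    linarith
  -- decompose b = P (M* (M u))
  have hb : P (Mstar (M u)) = P u + -(P ((ContinuousLinearMap.id ℝ (EuclideanSpace ℝ (Fin d)) -
      Mstar ∘L M) u)) := by
    simp [map_sub]
  have hbsq : ‖P (Mstar (M u))‖ ^ 2 ≤ (1 + α) * (‖u‖ ^ 2 - ‖u - P u‖ ^ 2) +
      (1 + 1 / α) * δ ^ 2 * ‖u‖ ^ 2 := by
    rw [hb]
    have h1 := split_sq (P u)
      (-(P ((ContinuousLinearMap.id ℝ (EuclideanSpace ℝ (Fin d)) - Mstar ∘L M) u))) α hα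
    rw [norm_neg] at h1
    have h2 : ‖P ((ContinuousLinearMap.id ℝ (EuclideanSpace ℝ (Fin d)) - Mstar ∘L M) u)‖ ^ 2
        ≤ δ ^ 2 * ‖u‖ ^ 2 := by
      calc _ ≤ (δ * ‖u‖) ^ 2 := pow_le_pow_left₀ (norm_nonneg _) hδu 2
        _ = δ ^ 2 * ‖u‖ ^ 2 := by ring
    have h1α : (0:ℝ) ≤ 1 + 1 / α := by positivity
    have h3 := mul_le_mul_of_nonneg_left h2 h1α
    rw [hpyth] at h1
    calc _ ≤ _ := h1
      _ ≤ (1 + α) * (‖u‖ ^ 2 - ‖u - P u‖ ^ 2) + (1 + 1 / α) * (δ ^ 2 * ‖u‖ ^ 2) := by linarith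
      _ = (1 + α) * (‖u‖ ^ 2 - ‖u - P u‖ ^ 2) + (1 + 1 / α) * δ ^ 2 * ‖u‖ ^ 2 := by ring
  -- main split
  have hmain : P (Mstar (M u + e)) = P (Mstar (M u)) + P (Mstar e) := by
    simp [map_add]
  rw [hmain]
  have h0 := split_sq (P (Mstar (M u))) (P (Mstar e)) γ hγ
  have h1γ : (1:ℝ) + 1 / γ = (1 + γ) / γ := by field_simp; ring
  have h1γpos : (0:ℝ) < 1 + γ := by linarith
  calc ‖P (Mstar (M u)) + P (Mstar e)‖ ^ 2
      ≤ (1 + γ) * ‖P (Mstar (M u))‖ ^ 2 + (1 + 1 / γ) * ‖P (Mstar e)‖ ^ 2 := h0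
    _ ≤ (1 + γ) * ((1 + α) * (‖u‖ ^ 2 - ‖u - P u‖ ^ 2) + (1 + 1 / α) * δ ^ 2 * ‖u‖ ^ 2)
        + (1 + 1 / γ) * ((1 + δ') * ‖e‖ ^ 2) := by
        have h1γ' : (0:ℝ) ≤ 1 + 1 / γ := by positivity
        have hA := mul_le_mul_of_nonneg_left hbsq h1γpos.le
        have hB := mul_le_mul_of_nonneg_left hPMe h1γ'
        linarith
    _ = ((1 + γ) / γ) * (1 + δ') * ‖e‖ ^ 2 +
        (1 + α) * (1 + γ) * (‖u‖ ^ 2 - ‖u - P u‖ ^ 2) +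
        (1 + 1 / α) * (1 + γ) * δ ^ 2 * ‖u‖ ^ 2 := by
        rw [← h1γ]; ring
end
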